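/- Let $n$ be a positive integer and let $x \le y$ be positive integers with $y/n < e^{-1}$ (so in particular $\sqrt{x/n}, \sqrt{y/n} \in (0,1)$). Then $x - \mathrm{Bin}(x, \sqrt{x/n})$ is stochastically dominated by $y - \mathrm{Bin}(y, \sqrt{y/n})$. -/

import Mathlib

open Finset

/-- `ℙ(m - Bin(m,p) ≥ t)` for an integer `t`, written out via the binomial pmf. -/
noncomputable def complBinomialTail (m : ℕ) (p : ℝ) (t : ℤ) : ℝ :=
  ∑ k ∈ (Finset.range (m + 1)).filter (fun k : ℕ => t ≤ (m : ℤ) - (k : ℤ)),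
    (m.choose k : ℝ) * p ^ k * (1 - p) ^ (m - k)

lemma tail_reindex (m : ℕ) (p : ℝ) (t : ℤ) :
    complBinomialTail m p t =
      ∑ j ∈ (Finset.range (m + 1)).filter (fun j : ℕ => t ≤ (j : ℤ)),
        (m.choose j : ℝ) * (1 - p) ^ j * p ^ (m - j) := by
  unfold complBinomialTail
  refine Finset.sum_nbij' (i := fun k => m - k) (j := fun k => m - k) ?_ ?_ ?_ ?_ ?_
  · intro k hk
    simp only [mem_filter, mem_range] at hk ⊢
    omega
  · intro k hk
    simp only [mem_filter, mem_range] at hk ⊢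
    omega
  · intro k hk; simp only [mem_filter, mem_range] at hk; omega
  · intro k hk; simp only [mem_filter, mem_range] at hk; omega
  · intro k hk
    simp only [mem_filter, mem_range] at hk
    have hk' : k ≤ m := by omega
    rw [Nat.choose_symm hk']
    have h2 : m - (m - k) = k := by omega
    rw [h2]
    ring

lemma mul_log_anti {s t : ℝ} (hs : 0 < s) (hst : s ≤ t) (ht : t < Real.exp (-1)) :
    t * Real.log t ≤ s * Real.log s := by
  rcases eq_or_lt_of_le hst with rfl | hlt
  · exact le_rfl
  have H : StrictAntiOn (fun u : ℝ => u * Real.log u) (Set.Icc s t) := by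
    apply strictAntiOn_of_deriv_neg (convex_Icc s t)
    · exact Real.continuous_mul_log.continuousOn
    · intro u hu
      rw [interior_Icc] at hu
      have hu0 : 0 < u := lt_trans hs hu.1
      rw [(Real.hasDerivAt_mul_log hu0.ne').deriv]
      have : Real.log u < -1 := (Real.log_lt_iff_lt_exp hu0).mpr (lt_trans hu.2 ht)
      linarith
  exact (H ⟨le_rfl, hst⟩ ⟨hst, le_rfl⟩ hlt).le

/-- Abstract single-crossing comparison of filtered sums. -/
lemma crossing_sum_le (y : ℕ) (f g : ℕ → ℝ) (t : ℤ)
    (hsumf : ∑ j ∈ range (y + 1), f j = 1)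
    (hsumg : ∑ j ∈ range (y + 1), g j = 1)
    (hcross : ∀ j, j + 1 ≤ y → f j < g j → f (j + 1) < g (j + 1)) :
    ∑ j ∈ (range (y + 1)).filter (fun j : ℕ => t ≤ (j : ℤ)), f j ≤
      ∑ j ∈ (range (y + 1)).filter (fun j : ℕ => t ≤ (j : ℤ)), g j := by
  by_cases hall : ∀ j ∈ (range (y + 1)).filter (fun j : ℕ => ¬ t ≤ (j : ℤ)), g j ≤ f j
  · have h1 := Finset.sum_filter_add_sum_filter_not (range (y + 1)) (fun j : ℕ => t ≤ (j : ℤ)) f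
    have h2 := Finset.sum_filter_add_sum_filter_not (range (y + 1)) (fun j : ℕ => t ≤ (j : ℤ)) g
    have h3 := Finset.sum_le_sum hall
    rw [hsumf] at h1
    rw [hsumg] at h2
    linarith
  · push_neg at hall
    obtain ⟨j0, hj0mem, hj0⟩ := hall
    simp only [mem_filter, mem_range, not_le] at hj0mem
    have prop : ∀ k, j0 ≤ k → k ≤ y → f k < g k := by
      intro k hk
      induction k, hk using Nat.le_induction with
      | base => intro _; exact hj0
      | succ k hk ih => intro hky; exact hcross k hky (ih (by omega))
    apply Finset.sum_le_sum
    intro j hj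
    simp only [mem_filter, mem_range] at hj
    have hj0j : j0 ≤ j := by
      have := lt_of_lt_of_le hj0mem.2 hj.2
      omega
    exact (prop j hj0j (by omega)).le

set_option maxHeartbeats 1000000 in
/-- Klenke–Mattner style sufficiency, in the `complBinomialTail` normalization. -/
lemma km_domination (x y : ℕ) (P Q : ℝ) (hxy : x ≤ y) (hP : 0 < P) (hPQ : P ≤ Q)
    (hQ1 : Q < 1) (h0 : Q ^ y ≤ P ^ x) :
    ∀ t : ℤ, complBinomialTail x P t ≤ complBinomialTail y Q t := by
  intro t
  have hQ0 : 0 < Q := lt_of_lt_of_le hP hPQ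
  have hP1 : P < 1 := lt_of_le_of_lt hPQ hQ1
  set a : ℝ := 1 - P with ha
  set b : ℝ := 1 - Q with hb
  have ha0 : 0 < a := by rw [ha]; linarith
  have hb0 : 0 < b := by rw [hb]; linarith
  set f : ℕ → ℝ := fun j => (x.choose j : ℝ) * a ^ j * P ^ (x - j) with hf
  set g : ℕ → ℝ := fun j => (y.choose j : ℝ) * b ^ j * Q ^ (y - j) with hg
  have hfnn : ∀ j, 0 ≤ f j := by
    intro j; rw [hf]; positivity
  have hgpos : ∀ j, j ≤ y → 0 < g j := by
    intro j hj; rw [hg]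
    have := Nat.choose_pos hj
    have h2 : (0:ℝ) < (y.choose j : ℝ) := by exact_mod_cast this
    positivity
  have hf0 : f 0 = P ^ x := by simp [hf]
  have hg0 : g 0 = Q ^ y := by simp [hg]
  -- sums to one
  have hsumf : ∑ j ∈ range (y + 1), f j = 1 := by
    have h1 : ∑ j ∈ range (x + 1), f j = 1 := by
      have haP : a + P = 1 := by rw [ha]; ring
      calc ∑ j ∈ range (x + 1), f j
          = ∑ j ∈ range (x + 1), a ^ j * P ^ (x - j) * (x.choose j : ℝ) :=
            Finset.sum_congr rfl (fun j _ => by rw [hf]; ring)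
        _ = (a + P) ^ x := (add_pow a P x).symm
        _ = 1 := by rw [haP, one_pow]
    rw [← h1]
    symm
    apply Finset.sum_subset
    · intro j hj; simp only [mem_range] at hj ⊢; omega
    · intro j _ hj
      simp only [mem_range, not_lt] at hj
      rw [hf]
      simp [Nat.choose_eq_zero_of_lt (show x < j by omega)]
  have hsumg : ∑ j ∈ range (y + 1), g j = 1 := by
    have hbQ : b + Q = 1 := by rw [hb]; ring
    calc ∑ j ∈ range (y + 1), g j
        = ∑ j ∈ range (y + 1), b ^ j * Q ^ (y - j) * (y.choose j : ℝ) :=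
          Finset.sum_congr rfl (fun j _ => by rw [hg]; ring)
      _ = (b + Q) ^ y := (add_pow b Q y).symm
      _ = 1 := by rw [hbQ, one_pow]
  -- key cross-ratio identities
  have e1 : ∀ j, j + 1 ≤ x → ((j : ℝ) + 1) * P * f (j + 1) = ((x : ℝ) - j) * a * f j := by
    intro j hj
    have hc : ((x.choose (j + 1) : ℕ) : ℝ) * ((j : ℝ) + 1) = (x.choose j : ℝ) * ((x : ℝ) - j) := by
      have h := Nat.choose_succ_right_eq x j
      have h' : ((x.choose (j + 1) * (j + 1) : ℕ) : ℝ) = ((x.choose j * (x - j) : ℕ) : ℝ) := by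
        exact_mod_cast congrArg (fun n : ℕ => (n : ℝ)) h
      push_cast [Nat.cast_sub (show j ≤ x by omega)] at h'
      linarith
    have hp : P ^ (x - j) = P ^ (x - (j + 1)) * P := by
      rw [← pow_succ]; congr 1; omega
    simp only [hf]
    rw [hp, pow_succ]
    linear_combination (P * (a ^ j * a) * P ^ (x - (j + 1))) * hc
  have e2 : ∀ j, j + 1 ≤ y → ((j : ℝ) + 1) * Q * g (j + 1) = ((y : ℝ) - j) * b * g j := by
    intro j hj
    have hc : ((y.choose (j + 1) : ℕ) : ℝ) * ((j : ℝ) + 1) = (y.choose j : ℝ) * ((y : ℝ) - j) := by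
      have h := Nat.choose_succ_right_eq y j
      have h' : ((y.choose (j + 1) * (j + 1) : ℕ) : ℝ) = ((y.choose j * (y - j) : ℕ) : ℝ) := by
        exact_mod_cast congrArg (fun n : ℕ => (n : ℝ)) h
      push_cast [Nat.cast_sub (show j ≤ y by omega)] at h'
      linarith
    have hp : Q ^ (y - j) = Q ^ (y - (j + 1)) * Q := by
      rw [← pow_succ]; congr 1; omega
    simp only [hg]
    rw [hp, pow_succ]
    linear_combination (Q * (b ^ j * b) * Q ^ (y - (j + 1))) * hc
  have key : ∀ j, j + 1 ≤ x →
      ((j : ℝ) + 1) * (P * Q) * (f (j + 1) * g j - f j * g (j + 1)) =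
        f j * g j * (((x : ℝ) - j) * a * Q - ((y : ℝ) - j) * b * P) := by
    intro j hj
    have h1 := e1 j hj
    have h2 := e2 j (by omega)
    linear_combination Q * g j * h1 - P * f j * h2
  -- single crossing
  have claimC : ∀ j, j + 1 ≤ y → f j < g j → f (j + 1) < g (j + 1) := by
    intro j hjy hfg
    by_cases hjx : j + 1 ≤ x
    · have hkey := key j hjx
      by_cases hwle : ((x : ℝ) - j) * a * Q - ((y : ℝ) - j) * b * P ≤ 0
      · have hgj := hgpos j (by omega)
        have hgj1 := hgpos (j + 1) hjy
        have hpos : (0:ℝ) < ((j : ℝ) + 1) * (P * Q) := by positivity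
        have hnp : f j * g j * (((x : ℝ) - j) * a * Q - ((y : ℝ) - j) * b * P) ≤ 0 :=
          mul_nonpos_of_nonneg_of_nonpos (mul_nonneg (hfnn j) hgj.le) hwle
        have hd : f (j + 1) * g j - f j * g (j + 1) ≤ 0 := by
          have h' : ((j : ℝ) + 1) * (P * Q) * (f (j + 1) * g j - f j * g (j + 1)) ≤
              ((j : ℝ) + 1) * (P * Q) * 0 := by
            rw [mul_zero, hkey]; exact hnp
          exact le_of_mul_le_mul_left h' hpos
        have hlt : f (j + 1) * g j < g (j + 1) * g j := by
          nlinarith [hd, mul_lt_mul_of_pos_right hfg hgj1]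
        exact lt_of_mul_lt_mul_right hlt hgj.le
      · exfalso
        push_neg at hwle
        have hchain : ∀ i, i ≤ j → f 0 * g i ≤ f i * g 0 := by
          intro i
          induction i with
          | zero => intro _; exact le_of_eq (by ring)
          | succ i ih =>
            intro hi
            have h1 : f 0 * g i ≤ f i * g 0 := ih (by omega)
            have hij : (i : ℝ) ≤ (j : ℝ) := by exact_mod_cast Nat.cast_le.mpr (show i ≤ j by omega)
            have hqp : 0 ≤ Q - P := by linarith
            have hwi : 0 ≤ ((x : ℝ) - i) * a * Q - ((y : ℝ) - i) * b * P := by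
              have expand : ((x : ℝ) - i) * a * Q - ((y : ℝ) - i) * b * P
                  = (((x : ℝ) - j) * a * Q - ((y : ℝ) - j) * b * P) + ((j : ℝ) - i) * (Q - P) := by
                rw [ha, hb]; ring
              rw [expand]
              have : 0 ≤ ((j : ℝ) - i) * (Q - P) := mul_nonneg (by linarith) hqp
              linarith
            have hki := key i (by omega)
            have hgi := hgpos i (by omega)
            have hgi1 := hgpos (i + 1) (by omega)
            have hposI : (0:ℝ) < ((i : ℝ) + 1) * (P * Q) := by positivity
            have hnn : 0 ≤ f i * g i * (((x : ℝ) - i) * a * Q - ((y : ℝ) - i) * b * P) :=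
              mul_nonneg (mul_nonneg (hfnn i) hgi.le) hwi
            have h2 : f i * g (i + 1) ≤ f (i + 1) * g i := by
              have h' : ((i : ℝ) + 1) * (P * Q) * 0 ≤
                  ((i : ℝ) + 1) * (P * Q) * (f (i + 1) * g i - f i * g (i + 1)) := by
                rw [mul_zero, hki]; exact hnn
              have := le_of_mul_le_mul_left h' hposI
              linarith
            have hg0' := hgpos 0 (by omega)
            have h4 : f 0 * g (i + 1) * g i ≤ f (i + 1) * g 0 * g i := by
              nlinarith [mul_le_mul_of_nonneg_right h1 hgi1.le,
                mul_le_mul_of_nonneg_right h2 hg0'.le]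
            exact le_of_mul_le_mul_right h4 hgi
        have h3 := hchain j le_rfl
        have hgj := hgpos j (by omega)
        have hg0' := hgpos 0 (by omega)
        rw [hf0, hg0] at h3
        rw [hg0] at hg0'
        have hQy : (0:ℝ) < Q ^ y := pow_pos hQ0 y
        nlinarith [h3, mul_lt_mul_of_pos_right hfg hQy, mul_le_mul_of_nonneg_right h0 hgj.le]
    · have hz : f (j + 1) = 0 := by
        simp only [hf]
        simp [Nat.choose_eq_zero_of_lt (show x < j + 1 by omega)]
      rw [hz]
      exact hgpos (j + 1) hjy
  -- assemble
  rw [tail_reindex x P t, tail_reindex y Q t]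
  have hshow : (∑ j ∈ (range (x + 1)).filter (fun j : ℕ => t ≤ (j : ℤ)),
      (x.choose j : ℝ) * (1 - P) ^ j * P ^ (x - j)) =
      ∑ j ∈ (range (y + 1)).filter (fun j : ℕ => t ≤ (j : ℤ)), f j := by
    rw [show (∑ j ∈ (range (x + 1)).filter (fun j : ℕ => t ≤ (j : ℤ)),
        (x.choose j : ℝ) * (1 - P) ^ j * P ^ (x - j)) =
        ∑ j ∈ (range (x + 1)).filter (fun j : ℕ => t ≤ (j : ℤ)), f j from
      Finset.sum_congr rfl (fun j _ => by rw [hf])]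
    apply Finset.sum_subset
    · intro j hj; simp only [mem_filter, mem_range] at hj ⊢; exact ⟨by omega, hj.2⟩
    · intro j hj hj'
      simp only [mem_filter, mem_range] at hj hj'
      have hxj : x < j := by
        by_contra hcon
        exact hj' ⟨by omega, hj.2⟩
      simp only [hf]
      simp [Nat.choose_eq_zero_of_lt hxj]
  rw [hshow]
  have hshow2 : (∑ j ∈ (range (y + 1)).filter (fun j : ℕ => t ≤ (j : ℤ)),
      (y.choose j : ℝ) * (1 - Q) ^ j * Q ^ (y - j)) =
      ∑ j ∈ (range (y + 1)).filter (fun j : ℕ => t ≤ (j : ℤ)), g j :=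
    Finset.sum_congr rfl (fun j _ => by rw [hg])
  rw [hshow2]
  exact crossing_sum_le y f g t hsumf hsumg claimC

theorem compl_binomial_domination
    (n x y : ℕ) (hn : 0 < n) (hx : 0 < x) (hxy : x ≤ y)
    (hy : (y : ℝ) / n < Real.exp (-1)) :
    ∀ t : ℤ, complBinomialTail x (Real.sqrt ((x : ℝ) / n)) t ≤
      complBinomialTail y (Real.sqrt ((y : ℝ) / n)) t := by
  have hn' : (0:ℝ) < n := by exact_mod_cast hn
  have hx' : (0:ℝ) < x := by exact_mod_cast hx
  have hxy' : (x:ℝ) ≤ y := by exact_mod_cast hxy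
  have hs : 0 < (x:ℝ) / n := by positivity
  have hst : (x:ℝ) / n ≤ (y:ℝ) / n := by gcongr
  have hyn1 : (y:ℝ) / n < 1 := lt_trans hy (by
    calc Real.exp (-1) < Real.exp 0 := Real.exp_lt_exp.mpr (by norm_num)
    _ = 1 := Real.exp_zero)
  have hP : 0 < Real.sqrt ((x:ℝ) / n) := Real.sqrt_pos.mpr hs
  have hPQ : Real.sqrt ((x:ℝ) / n) ≤ Real.sqrt ((y:ℝ) / n) := Real.sqrt_le_sqrt hst
  have hQ1 : Real.sqrt ((y:ℝ) / n) < 1 := by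
    rw [show (1:ℝ) = Real.sqrt 1 by rw [Real.sqrt_one]]
    exact Real.sqrt_lt_sqrt (by positivity) hyn1
  have hlog := mul_log_anti hs hst hy
  have hpowle : ((y:ℝ)/n) ^ y ≤ ((x:ℝ)/n) ^ x := by
    have ex : ((x:ℝ)/n) ^ x = Real.exp ((x:ℝ) * Real.log ((x:ℝ)/n)) := by
      rw [← Real.log_pow, Real.exp_log (pow_pos hs x)]
    have ey : ((y:ℝ)/n) ^ y = Real.exp ((y:ℝ) * Real.log ((y:ℝ)/n)) := by
      rw [← Real.log_pow, Real.exp_log (pow_pos (lt_of_lt_of_le hs hst) y)]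
    rw [ex, ey]
    apply Real.exp_le_exp.mpr
    have hxeq : (x:ℝ) * Real.log ((x:ℝ)/n) = n * (((x:ℝ)/n) * Real.log ((x:ℝ)/n)) := by
      field_simp
    have hyeq : (y:ℝ) * Real.log ((y:ℝ)/n) = n * (((y:ℝ)/n) * Real.log ((y:ℝ)/n)) := by
      field_simp
    rw [hxeq, hyeq]
    exact mul_le_mul_of_nonneg_left hlog hn'.le
  have h0 : Real.sqrt ((y:ℝ)/n) ^ y ≤ Real.sqrt ((x:ℝ)/n) ^ x := by
    have h1 : (Real.sqrt ((y:ℝ)/n) ^ y) ^ 2 = ((y:ℝ)/n) ^ y := by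
      rw [← pow_mul, mul_comm y 2, pow_mul, Real.sq_sqrt (by positivity)]
    have h2 : (Real.sqrt ((x:ℝ)/n) ^ x) ^ 2 = ((x:ℝ)/n) ^ x := by
      rw [← pow_mul, mul_comm x 2, pow_mul, Real.sq_sqrt (by positivity)]
    calc Real.sqrt ((y:ℝ)/n) ^ y = Real.sqrt ((Real.sqrt ((y:ℝ)/n) ^ y) ^ 2) :=
          (Real.sqrt_sq (pow_nonneg (Real.sqrt_nonneg _) y)).symm
      _ ≤ Real.sqrt ((Real.sqrt ((x:ℝ)/n) ^ x) ^ 2) := by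
          apply Real.sqrt_le_sqrt
          rw [h1, h2]; exact hpowle
      _ = Real.sqrt ((x:ℝ)/n) ^ x := Real.sqrt_sq (pow_nonneg (Real.sqrt_nonneg _) x)
  exact km_domination x y _ _ hxy hP hPQ hQ1 h0
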